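/- For every unit vector a ∈ ℝ³, the operator norm (with respect to the Euclidean norm on ℝ⁶) of the 6×6 block matrix A = [[−I, [a]ₓ],[[a]ₓ, 0]] is at most √3. -/

import Mathlib

open Matrix

noncomputable section

/-- Euclidean norm on ℝ³. -/
def enorm3 (x : Fin 3 → ℝ) : ℝ := Real.sqrt (∑ i, (x i) ^ 2)

/-- Skew-symmetric cross-product matrix `[x]ₓ`. -/
def skew3 (x : Fin 3 → ℝ) : Matrix (Fin 3) (Fin 3) ℝ :=
  !![0, -x 2, x 1; x 2, 0, -x 0; -x 1, x 0, 0]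

/-- Euclidean norm on ℝ⁶ = ℝ³ × ℝ³. -/
def enorm6 (Z : Fin 3 ⊕ Fin 3 → ℝ) : ℝ := Real.sqrt (∑ i, (Z i) ^ 2)

/-- The 6×6 block matrix `A = [[−I, [a]ₓ], [[a]ₓ, 0]]`. -/
def Amat (a : Fin 3 → ℝ) : Matrix (Fin 3 ⊕ Fin 3) (Fin 3 ⊕ Fin 3) ℝ :=
  Matrix.fromBlocks (-1) (skew3 a) (skew3 a) 0

/-- for a unit vector `a`, the Euclidean operator norm of
`A = [[−I, [a]ₓ], [[a]ₓ, 0]]` is at most `√3`:  `|A X| ≤ √3 |X|` for all `X ∈ ℝ⁶`. -/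
theorem Amat_operator_norm_le_sqrt_three
    (a : Fin 3 → ℝ) (ha : enorm3 a = 1) :
    ∀ X : Fin 3 ⊕ Fin 3 → ℝ, enorm6 ((Amat a).mulVec X) ≤ Real.sqrt 3 * enorm6 X := by
  intro X
  have ha2 : ∑ i, (a i) ^ 2 = 1 := by
    have h := ha
    unfold enorm3 at h
    have hnn : (0:ℝ) ≤ ∑ i, (a i) ^ 2 := Finset.sum_nonneg fun i _ => sq_nonneg _
    nlinarith [Real.sq_sqrt hnn]
  unfold enorm6
  rw [← Real.sqrt_mul (by norm_num : (0:ℝ) ≤ 3)]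
  apply Real.sqrt_le_sqrt
  have ha3 : a 0 ^ 2 + a 1 ^ 2 + a 2 ^ 2 = 1 := by
    simpa [Fin.sum_univ_three] using ha2
  simp only [Amat, skew3, Matrix.mulVec, dotProduct, Fintype.sum_sum_type,
    Fin.sum_univ_three, Matrix.fromBlocks_apply₁₁, Matrix.fromBlocks_apply₁₂,
    Matrix.fromBlocks_apply₂₁, Matrix.fromBlocks_apply₂₂, Matrix.neg_apply,
    Matrix.one_apply, Matrix.zero_apply, Matrix.cons_val_zero, Matrix.cons_val_one,
    Matrix.head_cons, Matrix.cons_val_two, Matrix.tail_cons, Matrix.head_fin_const, Matrix.of_apply, Matrix.cons_val]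
  norm_num [Fin.ext_iff]
  set x0 := X (Sum.inl 0); set x1 := X (Sum.inl 1); set x2 := X (Sum.inl 2)
  set y0 := X (Sum.inr 0); set y1 := X (Sum.inr 1); set y2 := X (Sum.inr 2)
  nlinarith [sq_nonneg (a 0 * y0 + a 1 * y1 + a 2 * y2),
    sq_nonneg (a 0 * x0 + a 1 * x1 + a 2 * x2),
    sq_nonneg (x0 + (a 1 * y2 - a 2 * y1)), sq_nonneg (x1 + (a 2 * y0 - a 0 * y2)),
    sq_nonneg (x2 + (a 0 * y1 - a 1 * y0)),
    sq_nonneg y0, sq_nonneg y1, sq_nonneg y2, sq_nonneg x0, sq_nonneg x1, sq_nonneg x2,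
    ha3]

end
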